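/- For the G/G/2 queue, the departure times satisfy D k = (C 1 ⊔ C 2 ⊔ ⋯ ⊔ C k) ⊓ C (k+1) for all k ≥ 1. -/

import Mathlib

/-- `orderStat f k` is the `k`-th smallest value (0-indexed, ties counted with
multiplicity) of the finite sequence `f`. -/
noncomputable def orderStat {n : ℕ} (f : Fin n → ℝ) (k : Fin n) : ℝ :=
  f (Tuple.sort f k)

open Finset in
lemma orderStat_le_iff {n : ℕ} (f : Fin n → ℝ) (k : Fin n) (x : ℝ) :
    orderStat f k ≤ x ↔ (k : ℕ) + 1 ≤ (univ.filter (fun i => f i ≤ x)).card := by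
  classical
  have hmono : Monotone (f ∘ Tuple.sort f) := Tuple.monotone_sort f
  have hcard : (univ.filter (fun i => f (Tuple.sort f i) ≤ x)).card
      = (univ.filter (fun i => f i ≤ x)).card := by
    apply Finset.card_bij (fun i _ => Tuple.sort f i)
    · intro a ha
      simp only [mem_filter, mem_univ, true_and] at ha ⊢
      exact ha
    · intro a _ b _ h
      exact (Tuple.sort f).injective h
    · intro b hb
      refine ⟨(Tuple.sort f)⁻¹ b, ?_, by simp⟩
      simp only [mem_filter, mem_univ, true_and, Equiv.Perm.inv_def, Equiv.apply_symm_apply] at hb ⊢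
      exact hb
  rw [← hcard]
  constructor
  · intro h
    have hsub : Finset.Iic k ⊆ univ.filter (fun i => f (Tuple.sort f i) ≤ x) := by
      intro j hj
      simp only [mem_filter, mem_univ, true_and]
      exact le_trans (hmono (Finset.mem_Iic.mp hj)) h
    calc (k : ℕ) + 1 = (Finset.Iic k).card := (Fin.card_Iic k).symm
      _ ≤ _ := Finset.card_le_card hsub
  · intro h
    by_contra hlt
    push_neg at hlt
    have hsub : univ.filter (fun i => f (Tuple.sort f i) ≤ x) ⊆ Finset.Iio k := by
      intro j hj
      simp only [mem_filter, mem_univ, true_and] at hj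
      simp only [Finset.mem_Iio]
      by_contra hk
      push_neg at hk
      exact absurd (le_trans (hmono hk) hj) (not_le.mpr hlt)
    have := Finset.card_le_card hsub
    rw [Fin.card_Iio] at this
    omega

open Finset in
lemma card_filter_fin (n : ℕ) (C : ℕ → ℝ) (x : ℝ) :
    (univ.filter (fun i : Fin n => C (i.1 + 1) ≤ x)).card
      = ((Icc 1 n).filter (fun i => C i ≤ x)).card := by
  apply Finset.card_bij (fun i _ => i.1 + 1)
  · intro a ha
    simp only [mem_filter, mem_univ, true_and, mem_Icc] at ha ⊢
    exact ⟨⟨by omega, by omega⟩, ha⟩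
  · intro a _ b _ h
    exact Fin.ext (by omega)
  · intro b hb
    simp only [mem_filter, mem_Icc] at hb
    refine ⟨⟨b - 1, by omega⟩, ?_, by simp; omega⟩
    simp only [mem_filter, mem_univ, true_and]
    have hb1 : b - 1 + 1 = b := by omega
    rw [hb1]
    exact hb.2

/-- For the `G/G/2` queue, the departure times satisfy
`D k = (C 1 ⊔ ⋯ ⊔ C k) ⊓ C (k+1)` for all `k ≥ 1`. -/
theorem stmt7 (α τ A C D : ℕ → ℝ)
    (hα : ∀ k, 1 ≤ k → 0 ≤ α k) (hτ : ∀ k, 1 ≤ k → 0 < τ k)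
    (hA0 : A 0 = 0) (hA : ∀ k, 1 ≤ k → A k = A (k - 1) + α k)
    (hD0 : D 0 = 0)
    (hC : ∀ k, 1 ≤ k → C k = (A k ⊔ D (k - 2)) + τ k)
    (hD : ∀ k (hk : 1 ≤ k),
      D k = orderStat (fun i : Fin (k + 1) => C (i.1 + 1)) ⟨k - 1, by omega⟩) :
    ∀ k (hk : 1 ≤ k),
      D k = (Finset.Icc 1 k).sup' (Finset.nonempty_Icc.mpr hk) C ⊓ C (k + 1) := by
  classical
  intro k hk
  set M := (Finset.Icc 1 k).sup' (Finset.nonempty_Icc.mpr hk) C with hMdef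
  set L := C (k + 1) with hLdef
  have key : ∀ x : ℝ, D k ≤ x ↔
      k ≤ ((Finset.Icc 1 (k + 1)).filter (fun i => C i ≤ x)).card := by
    intro x
    rw [hD k hk, orderStat_le_iff, card_filter_fin (k + 1) C x]
    have h1 : ((⟨k - 1, by omega⟩ : Fin (k + 1)) : ℕ) = k - 1 := rfl
    rw [h1]
    omega
  have hnot : (k + 1) ∉ Finset.Icc 1 k := by simp
  have hIcc : Finset.Icc 1 (k + 1) = insert (k + 1) (Finset.Icc 1 k) := by
    ext i; simp [Finset.mem_Icc]; omega
  -- at most one of C 1 .. C k exceeds L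
  have hS : k - 1 ≤ ((Finset.Icc 1 k).filter (fun i => C i ≤ L)).card := by
    rcases Nat.lt_or_ge k 2 with h2 | h2
    · omega
    · have hD' := hD (k - 1) (by omega)
      have hCk1 := hC (k + 1) (by omega)
      have hkk : k + 1 - 2 = k - 1 := by omega
      rw [hkk] at hCk1
      have hL : D (k - 1) ≤ L := by
        rw [hLdef, hCk1]
        have h3 := (hτ (k + 1) (by omega)).le
        have h4 := le_sup_right (a := A (k + 1)) (b := D (k - 1))
        linarith
      rw [hD'] at hL
      have h5 := (orderStat_le_iff _ _ L).mp hL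
      rw [card_filter_fin (k - 1 + 1) C L] at h5
      have h6 : k - 1 - 1 + 1 ≤
          ((Finset.Icc 1 (k - 1 + 1)).filter (fun i => C i ≤ L)).card := h5
      have hk1 : k - 1 + 1 = k := by omega
      rw [hk1] at h6
      omega
  apply le_antisymm
  · rw [key (M ⊓ L)]
    rcases le_total M L with hML | hML
    · have hsub : Finset.Icc 1 k ⊆
          (Finset.Icc 1 (k + 1)).filter (fun i => C i ≤ M ⊓ L) := by
        intro i hi
        simp only [Finset.mem_filter, Finset.mem_Icc] at hi ⊢
        refine ⟨⟨hi.1, by omega⟩, le_inf ?_ ?_⟩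
        · exact Finset.le_sup' C (Finset.mem_Icc.mpr hi)
        · exact (Finset.le_sup' C (Finset.mem_Icc.mpr hi)).trans hML
      calc k = (Finset.Icc 1 k).card := by rw [Nat.card_Icc]; omega
        _ ≤ _ := Finset.card_le_card hsub
    · have hmono : ((Finset.Icc 1 k).filter (fun i => C i ≤ L)).card ≤
          ((Finset.Icc 1 k).filter (fun i => C i ≤ M ⊓ L)).card := by
        apply Finset.card_le_card
        intro i hi
        have h7 := Finset.mem_filter.mp hi
        exact Finset.mem_filter.mpr ⟨h7.1, le_inf (h7.2.trans hML) h7.2⟩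
      have hpos : C (k + 1) ≤ M ⊓ L := le_inf hML le_rfl
      have hni : k + 1 ∉ (Finset.Icc 1 k).filter (fun i => C i ≤ M ⊓ L) :=
        fun h => hnot (Finset.filter_subset _ _ h)
      rw [hIcc, Finset.filter_insert, if_pos hpos, Finset.card_insert_of_notMem hni]
      omega
  · have hcard := (key (D k)).mp le_rfl
    rcases le_or_gt L (D k) with hL2 | hL2
    · exact inf_le_right.trans hL2
    · have hnotin : k + 1 ∉ (Finset.Icc 1 (k + 1)).filter (fun i => C i ≤ D k) := by
        simp only [Finset.mem_filter, not_and]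
        intro _
        exact not_le.mpr hL2
      have hsub : (Finset.Icc 1 (k + 1)).filter (fun i => C i ≤ D k) ⊆
          Finset.Icc 1 k := by
        intro i hi
        have hmem := Finset.mem_filter.mp hi
        have hik : i ≠ k + 1 := fun h => hnotin (h ▸ hi)
        have := Finset.mem_Icc.mp hmem.1
        exact Finset.mem_Icc.mpr ⟨this.1, by omega⟩
      have heq : (Finset.Icc 1 (k + 1)).filter (fun i => C i ≤ D k) =
          Finset.Icc 1 k :=
        Finset.eq_of_subset_of_card_le hsub (by rw [Nat.card_Icc]; omega)
      refine inf_le_left.trans (Finset.sup'_le _ _ ?_)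
      intro i hi
      exact (Finset.mem_filter.mp (heq ▸ hi : i ∈ _)).2
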